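/- Let T ∈ ℕ and consider a deterministic array (p_t, c_t)_{t=0}^{T} with p_t ∈ ℝ^L_{++} and c_t ∈ ℝ^L_+ \ {0}. The array is R-rationalizable if and only if there exist scalars λ_t > 0 and v_t > 0 for t ∈ {0,…,T} such that v_t − v_s ≥ λ_t p_tᵀ (c_t − c_s) for all t, s ∈ {0,…,T}. -/

import Mathlib

open MeasureTheory Filter Topology Finset

noncomputable section

/-- Vectors in ℝ^L with the Euclidean norm. -/
abbrev Vec (L : ℕ) := EuclideanSpace ℝ (Fin L)

/-- Inner product (dot product) of two vectors. -/
def dotp {L : ℕ} (p c : Vec L) : ℝ := ∑ j, p j * c j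

/-- Componentwise nonnegative vectors: the set ℝ^L_+. -/
def NonnegV {L : ℕ} (c : Vec L) : Prop := ∀ j, 0 ≤ c j

/-- The consumption space ℝ^L_+ \ {0}. -/
def ConsV {L : ℕ} (c : Vec L) : Prop := NonnegV c ∧ c ≠ 0

/-- Componentwise strictly positive vectors: the set ℝ^L_{++}. -/
def PosV {L : ℕ} (p : Vec L) : Prop := ∀ j, 0 < p j

/-- Concavity of u on its domain ℝ^L_+. -/
def IsConcaveNN {L : ℕ} (u : Vec L → ℝ) : Prop :=
  ∀ c c' : Vec L, NonnegV c → NonnegV c' → ∀ a : ℝ, 0 ≤ a → a ≤ 1 →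
    a * u c + (1 - a) * u c' ≤ u (a • c + (1 - a) • c')

/-- Local nonsatiation of u on its domain ℝ^L_+. -/
def LocallyNonsatiatedNN {L : ℕ} (u : Vec L → ℝ) : Prop :=
  ∀ c : Vec L, NonnegV c → ∀ ε : ℝ, 0 < ε →
    ∃ c' : Vec L, NonnegV c' ∧ ‖c' - c‖ < ε ∧ u c < u c'

/-- Continuity of u on its domain ℝ^L_+. -/
def ContinuousNN {L : ℕ} (u : Vec L → ℝ) : Prop := ContinuousOn u {c | NonnegV c}

/-- A concave, locally nonsatiated, continuous utility function on ℝ^L_+. -/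
def NiceUtility {L : ℕ} (u : Vec L → ℝ) : Prop :=
  IsConcaveNN u ∧ LocallyNonsatiatedNN u ∧ ContinuousNN u

/-- ξ is a supergradient of u at c: u(c') − u(c) ≤ ξᵀ(c'−c) for all c' ∈ ℝ^L_+ \ {0}. -/
def Supergrad {L : ℕ} (u : Vec L → ℝ) (c ξ : Vec L) : Prop :=
  ∀ c' : Vec L, ConsV c' → u c' - u c ≤ dotp ξ (c' - c)

/-- R-rationalizability: there exist a nice utility u and income levels y_t > 0 such that
each c_t maximizes u over {c ∈ ℝ^L_+ : p_tᵀ c = y_t}. -/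
def RRat {L T : ℕ} (p c : Fin (T + 1) → Vec L) : Prop :=
  ∃ u : Vec L → ℝ, ∃ y : Fin (T + 1) → ℝ,
    NiceUtility u ∧ (∀ t, 0 < y t) ∧
    ∀ t, dotp (p t) (c t) = y t ∧
      ∀ z : Vec L, NonnegV z → dotp (p t) z = y t → u z ≤ u (c t)



open scoped InnerProductSpace

section Aux

lemma dotp_eq_inner {L : ℕ} (p z : Vec L) : dotp p z = ⟪p, z⟫_ℝ := by
  simp [dotp, PiLp.inner_apply, RCLike.inner_apply, conj_trivial]
  exact Finset.sum_congr rfl (fun _ _ => mul_comm _ _)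

lemma dotp_sub {L : ℕ} (p x y : Vec L) : dotp p (x - y) = dotp p x - dotp p y := by
  simp [dotp_eq_inner, inner_sub_right]

lemma dotp_add {L : ℕ} (p x y : Vec L) : dotp p (x + y) = dotp p x + dotp p y := by
  simp [dotp_eq_inner, inner_add_right]

lemma dotp_comb {L : ℕ} (p x y : Vec L) (a b : ℝ) :
    dotp p (a • x + b • y) = a * dotp p x + b * dotp p y := by
  simp [dotp_eq_inner, inner_add_right, inner_smul_right]

lemma dotp_cont {L : ℕ} (q : Vec L) : Continuous (fun z : Vec L => dotp q z) := by
  simp only [dotp]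
  exact continuous_finset_sum _ (fun j _ => (continuous_const.mul (PiLp.continuous_apply 2 _ j)))

lemma dotp_le' {L : ℕ} (p v : Vec L) : dotp p v ≤ ‖p‖ * ‖v‖ := by
  rw [dotp_eq_inner]; exact real_inner_le_norm p v

lemma dotp_pos {L : ℕ} (p z : Vec L) (hp : PosV p) (hz : ConsV z) : 0 < dotp p z := by
  obtain ⟨j, hj⟩ : ∃ j, z j ≠ 0 := by
    by_contra h
    push_neg at h
    exact hz.2 (by ext j; simpa using h j)
  have hzj : 0 < z j := lt_of_le_of_ne (hz.1 j) (Ne.symm hj)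
  unfold dotp
  apply Finset.sum_pos' (fun i _ => mul_nonneg (hp i).le (hz.1 i))
  exact ⟨j, Finset.mem_univ j, mul_pos (hp j) hzj⟩

lemma cont_inf' {ι X : Type*} [TopologicalSpace X] (S : Finset ι) (hS : S.Nonempty)
    (g : ι → X → ℝ) (hg : ∀ i, Continuous (g i)) :
    Continuous (fun z => S.inf' hS (fun i => g i z)) := by
  induction hS using Finset.Nonempty.cons_induction with
  | singleton i => simpa using hg i
  | cons i s hi hs ih =>
      have : (fun z => (Finset.cons i s hi).inf' (Finset.cons_nonempty hi) (fun t => g t z))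
          = fun z => (g i z) ⊓ (s.inf' hs (fun t => g t z)) := by
        funext z
        exact Finset.inf'_cons (α := ℝ) (f := fun t => g t z) (H := hs)
      rw [this]
      exact (hg i).min ih

lemma max_budget {L : ℕ} (p : Vec L) (hp : PosV p) (u : Vec L → ℝ)
    (hlns : LocallyNonsatiatedNN u) (hcont : ContinuousNN u) (cT : Vec L)
    (hcT : NonnegV cT) (hy : 0 < dotp p cT)
    (hmax : ∀ z, NonnegV z → dotp p z = dotp p cT → u z ≤ u cT) :
    ∀ z, NonnegV z → dotp p z < dotp p cT → u z < u cT := by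
  set y := dotp p cT with hydef
  set K : Set (Vec L) := {w | NonnegV w ∧ dotp p w ≤ y} with hK
  have hKcl : IsClosed K := by
    have h1 : IsClosed {w : Vec L | NonnegV w} := by
      have : {w : Vec L | NonnegV w} = ⋂ j, {w : Vec L | 0 ≤ w j} := by
        ext w; simp [NonnegV, Set.mem_iInter]
      rw [this]
      exact isClosed_iInter (fun j => isClosed_le continuous_const (PiLp.continuous_apply 2 _ j))
    have h2 : IsClosed {w : Vec L | dotp p w ≤ y} :=
      isClosed_le (dotp_cont p) continuous_const
    exact h1.inter h2
  have hKbd : Bornology.IsBounded K := by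
    apply (Metric.isBounded_closedBall (x := (0 : Vec L))
      (r := Real.sqrt (∑ j, (y / p j)^2))).subset
    intro w hw
    rw [Metric.mem_closedBall, dist_zero_right, EuclideanSpace.norm_eq]
    have hb : ∀ j, ‖w j‖^2 ≤ (y / p j)^2 := by
      intro j
      have h0 : 0 ≤ w j := hw.1 j
      have h1 : p j * w j ≤ y := by
        refine le_trans ?_ hw.2
        unfold dotp
        refine Finset.single_le_sum (f := fun j => p j * w j) ?_ (Finset.mem_univ j)
        intro i _; exact mul_nonneg (hp i).le (hw.1 i)
      have h2 : w j ≤ y / p j := (le_div_iff₀ (hp j)).2 (by linarith [mul_comm (p j) (w j)])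
      rw [Real.norm_eq_abs, sq_abs]
      apply sq_le_sq' (by nlinarith [div_nonneg (le_trans (mul_nonneg (hp j).le h0) h1) (hp j).le]) h2
    calc Real.sqrt (∑ j, ‖w j‖^2) ≤ Real.sqrt (∑ j, (y/p j)^2) :=
          Real.sqrt_le_sqrt (Finset.sum_le_sum (fun j _ => hb j))
      _ = _ := rfl
  have hKc : IsCompact K := Metric.isCompact_of_isClosed_isBounded hKcl hKbd
  have hKne : K.Nonempty := ⟨0, fun j => le_refl 0, by
    simp only [dotp]; simp; positivity⟩
  have hKsub : K ⊆ {c : Vec L | NonnegV c} := fun w hw => hw.1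
  obtain ⟨w₀, hw₀K, hw₀max⟩ := hKc.exists_isMaxOn hKne (hcont.mono hKsub)
  have key : ∀ w, w ∈ K → IsMaxOn u K w → dotp p w = y := by
    intro w hwK hwmax
    by_contra hne
    have hlt : dotp p w < y := lt_of_le_of_ne hwK.2 hne
    have hεpos : 0 < (y - dotp p w) / (1 + ‖p‖) := by
      apply div_pos (by linarith) (by positivity)
    obtain ⟨w', hw'nn, hw'close, hw'gt⟩ := hlns w hwK.1 _ hεpos
    have hw'K : w' ∈ K := by
      refine ⟨hw'nn, ?_⟩
      have h3 : dotp p (w' - w) ≤ ‖p‖ * ‖w' - w‖ := dotp_le' p _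
      have h4 : dotp p w' = dotp p w + dotp p (w' - w) := by rw [dotp_sub]; ring
      have h5 : ‖p‖ * ‖w' - w‖ ≤ ‖p‖ * ((y - dotp p w)/(1 + ‖p‖)) := by
        apply mul_le_mul_of_nonneg_left hw'close.le (norm_nonneg p)
      have h6 : ‖p‖ * ((y - dotp p w)/(1 + ‖p‖)) ≤ y - dotp p w := by
        rw [mul_div_assoc']
        apply div_le_of_le_mul₀ (by positivity) (by linarith)
        nlinarith [norm_nonneg p]
      linarith
    exact absurd (hwmax hw'K) (not_le.2 hw'gt)
  have hw₀y : dotp p w₀ = y := key w₀ hw₀K hw₀max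
  have hw₀le : u w₀ ≤ u cT := hmax w₀ hw₀K.1 hw₀y
  intro z hz hzlt
  have hzK : z ∈ K := ⟨hz, hzlt.le⟩
  have hzle : u z ≤ u cT := le_trans (hw₀max hzK) hw₀le
  rcases lt_or_eq_of_le hzle with h | h
  · exact h
  · exfalso
    have hzmax : IsMaxOn u K z := by
      intro x hx
      calc u x ≤ u w₀ := hw₀max hx
        _ ≤ u cT := hw₀le
        _ = u z := h.symm
    exact absurd (key z hzK hzmax) (ne_of_lt hzlt)

/-- existence of the Afriat multiplier for a fixed t -/
lemma lam_exists {L T : ℕ} (p : Vec L) (hp : PosV p) (c : Fin (T+1) → Vec L)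
    (hc : ∀ s, ConsV (c s)) (u : Vec L → ℝ) (hconc : IsConcaveNN u)
    (hlns : LocallyNonsatiatedNN u) (hcont : ContinuousNN u) (t : Fin (T+1))
    (hmax : ∀ z, NonnegV z → dotp p z = dotp p (c t) → u z ≤ u (c t)) :
    ∃ l : ℝ, 0 < l ∧ ∀ s, u (c t) - u (c s) ≥ l * (dotp p (c t) - dotp p (c s)) := by
  set y := dotp p (c t) with hydef
  set m : Fin (T+1) → ℝ := fun s => dotp p (c s) with hmdef
  set U : Fin (T+1) → ℝ := fun s => u (c s) with hUdef
  have hy : 0 < y := dotp_pos p (c t) hp (hc t)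
  have hb : ∀ s, m s < y → U s < U t :=
    fun s hs => max_budget p hp u hlns hcont (c t) (hc t).1 hy hmax (c s) (hc s).1 hs
  have ha : ∀ s, m s = y → U s ≤ U t := fun s hs => hmax (c s) (hc s).1 hs
  have hcr : ∀ s s', m s < y → y < m s' →
      (y - m s) * (U s' - U t) ≤ (m s' - y) * (U t - U s) := by
    intro s s' hs hs'
    have hss' : m s < m s' := lt_trans hs hs'
    set α : ℝ := (m s' - y) / (m s' - m s) with hαdef
    have hα0 : 0 < α := div_pos (by linarith) (by linarith)
    have hα1 : α < 1 := by
      rw [div_lt_one (by linarith)]; linarith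
    have hw : NonnegV (α • c s + (1 - α) • c s') := by
      intro j
      have := (hc s).1 j
      have := (hc s').1 j
      simp only [PiLp.add_apply, PiLp.smul_apply, smul_eq_mul]
      nlinarith
    have hwb : dotp p (α • c s + (1 - α) • c s') = y := by
      rw [dotp_comb]
      have hd : m s' - m s ≠ 0 := by linarith
      have hkey : α * m s + (1 - α) * m s' = y := by
        rw [hαdef]; field_simp; ring
      exact hkey
    have h1 := hconc (c s) (c s') (hc s).1 (hc s').1 α hα0.le hα1.le
    have h2 := hmax _ hw hwb
    have h3 : α * U s + (1 - α) * U s' ≤ U t := le_trans h1 h2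
    rw [hαdef] at h3
    have hd : (0:ℝ) < m s' - m s := by linarith
    have h4 : (m s' - y) * U s + (y - m s) * U s' ≤ (m s' - m s) * U t := by
      have := mul_le_mul_of_nonneg_left h3 hd.le
      field_simp at this
      nlinarith [this]
    nlinarith [h4]
  set S : Finset (Fin (T+1)) := Finset.univ.filter (fun s => m s < y) with hSdef
  by_cases hS : S.Nonempty
  · refine ⟨S.inf' hS (fun s => (U t - U s)/(y - m s)), ?_, ?_⟩
    · rw [Finset.lt_inf'_iff]
      intro s hs
      rw [hSdef, Finset.mem_filter] at hs
      exact div_pos (by linarith [hb s hs.2]) (by linarith [hs.2])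
    · intro s
      set l := S.inf' hS (fun s => (U t - U s)/(y - m s)) with hldef
      show U t - U s ≥ l * (y - m s)
      rcases lt_trichotomy (m s) y with hlt | heq | hgt
      · have hmem : s ∈ S := by rw [hSdef, Finset.mem_filter]; exact ⟨Finset.mem_univ s, hlt⟩
        have h5 : l ≤ (U t - U s)/(y - m s) := Finset.inf'_le _ hmem
        have h6 : l * (y - m s) ≤ ((U t - U s)/(y - m s)) * (y - m s) :=
          mul_le_mul_of_nonneg_right h5 (by linarith)
        rw [div_mul_cancel₀ _ (by linarith : y - m s ≠ 0)] at h6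
        linarith
      · rw [heq]; simpa using ha s heq
      · obtain ⟨s0, hs0, hleq⟩ := Finset.exists_mem_eq_inf' hS (fun s => (U t - U s)/(y - m s))
        rw [hSdef, Finset.mem_filter] at hs0
        have hcr' := hcr s0 s hs0.2 hgt
        have h7 : (U s - U t) ≤ l * (m s - y) := by
          rw [hldef, hleq, div_mul_eq_mul_div, le_div_iff₀ (by linarith : (0:ℝ) < y - m s0)]
          nlinarith [hcr']
        nlinarith [h7]
  · have hge : ∀ s, y ≤ m s := by
      intro s
      by_contra h
      push_neg at h
      exact hS ⟨s, by rw [hSdef, Finset.mem_filter]; exact ⟨Finset.mem_univ s, h⟩⟩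
    set g : Fin (T+1) → ℝ := fun s => max 0 ((U s - U t)/(m s - y)) with hgdef
    refine ⟨1 + Finset.univ.sup' ⟨t, Finset.mem_univ t⟩ g, ?_, ?_⟩
    · have : g t ≤ Finset.univ.sup' ⟨t, Finset.mem_univ t⟩ g :=
        Finset.le_sup' g (Finset.mem_univ t)
      have : (0:ℝ) ≤ g t := le_max_left 0 _
      linarith [Finset.le_sup' g (Finset.mem_univ t), le_max_left (0:ℝ) ((U t - U t)/(m t - y))]
    · intro s
      set l := 1 + Finset.univ.sup' ⟨t, Finset.mem_univ t⟩ g with hldef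
      show U t - U s ≥ l * (y - m s)
      rcases eq_or_lt_of_le (hge s) with heq | hgt
      · rw [← heq]; simpa using ha s heq.symm
      · have hgs : (U s - U t)/(m s - y) ≤ g s := le_max_right _ _
        have h8 : g s ≤ Finset.univ.sup' ⟨t, Finset.mem_univ t⟩ g :=
          Finset.le_sup' g (Finset.mem_univ s)
        have h9 : (U s - U t)/(m s - y) ≤ l := by rw [hldef]; linarith
        have h10 : U s - U t ≤ l * (m s - y) := by
          rw [div_le_iff₀ (by linarith : (0:ℝ) < m s - y)] at h9
          linarith
        nlinarith [h10]

end Aux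

/-- the array (p_t, c_t) is R-rationalizable iff there exist λ_t > 0 and
v_t > 0 such that v_t − v_s ≥ λ_t p_tᵀ (c_t − c_s) for all t, s. -/
theorem stmt_2 {L T : ℕ} (p c : Fin (T + 1) → Vec L)
    (hp : ∀ t, PosV (p t)) (hc : ∀ t, ConsV (c t)) :
    RRat p c ↔
      ∃ lam v : Fin (T + 1) → ℝ, (∀ t, 0 < lam t) ∧ (∀ t, 0 < v t) ∧
        ∀ t s, v t - v s ≥ lam t * dotp (p t) (c t - c s) := by
  constructor
  · rintro ⟨u, y, ⟨hconc, hlns, hcont⟩, hypos, hmx⟩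
    have hmax' : ∀ t, ∀ z, NonnegV z → dotp (p t) z = dotp (p t) (c t) → u z ≤ u (c t) := by
      intro t z hz hze
      exact (hmx t).2 z hz (by rw [hze, (hmx t).1])
    choose lam hlam1 hlam2 using
      fun t => lam_exists (p t) (hp t) c hc u hconc hlns hcont t (hmax' t)
    set M : ℝ := 1 + Finset.univ.sup' ⟨0, Finset.mem_univ 0⟩ (fun s => -(u (c s))) with hMdef
    refine ⟨lam, fun s => u (c s) + M, hlam1, ?_, ?_⟩
    · intro s
      have h1 : -(u (c s)) ≤ Finset.univ.sup' ⟨0, Finset.mem_univ 0⟩ (fun s => -(u (c s))) :=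
        Finset.le_sup' (fun s => -(u (c s))) (Finset.mem_univ s)
      have h2 : (0:ℝ) < u (c s) + M := by rw [hMdef]; linarith
      exact h2
    · intro t s
      have h2 := hlam2 t s
      have h3 : dotp (p t) (c t - c s) = dotp (p t) (c t) - dotp (p t) (c s) := dotp_sub _ _ _
      rw [h3]
      have : (u (c t) + M) - (u (c s) + M) = u (c t) - u (c s) := by ring
      rw [this]
      exact h2
  · rintro ⟨lam, v, hlam, hv, hA⟩
    obtain ⟨j0, hj0⟩ : ∃ j, (c 0) j ≠ 0 := by
      by_contra h
      push_neg at h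
      exact (hc 0).2 (by ext j; simpa using h j)
    set f : Fin (T+1) → Vec L → ℝ :=
      fun t z => v t + lam t * (dotp (p t) z - dotp (p t) (c t)) with hfdef
    have hne : (Finset.univ : Finset (Fin (T+1))).Nonempty := ⟨0, Finset.mem_univ 0⟩
    set u : Vec L → ℝ := fun z => Finset.univ.inf' hne (fun t => f t z) with hudef
    have hule : ∀ z t, u z ≤ f t z := fun z t => Finset.inf'_le _ (Finset.mem_univ t)
    have huct : ∀ t, u (c t) = v t := by
      intro t
      apply le_antisymm
      · have := hule (c t) t
        simpa [hfdef] using this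
      · apply Finset.le_inf'
        intro s _
        have h1 := hA s t
        have h2 : dotp (p s) (c s - c t) = dotp (p s) (c s) - dotp (p s) (c t) := dotp_sub _ _ _
        rw [h2] at h1
        simp only [hfdef]
        nlinarith [h1]
    refine ⟨u, fun t => dotp (p t) (c t), ⟨?_, ?_, ?_⟩, fun t => dotp_pos _ _ (hp t) (hc t), ?_⟩
    · -- concave
      intro c1 c2 h1 h2 a ha0 ha1
      apply Finset.le_inf'
      intro t _
      have hft : f t (a • c1 + (1 - a) • c2) = a * f t c1 + (1 - a) * f t c2 := by
        simp only [hfdef, dotp_comb]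
        ring
      rw [hft]
      have e1 : a * u c1 ≤ a * f t c1 := mul_le_mul_of_nonneg_left (hule c1 t) ha0
      have e2 : (1 - a) * u c2 ≤ (1 - a) * f t c2 :=
        mul_le_mul_of_nonneg_left (hule c2 t) (by linarith)
      linarith
    · -- LNS
      intro z hz ε hε
      set d : Vec L := EuclideanSpace.single j0 (ε/2) with hddef
      refine ⟨z + d, ?_, ?_, ?_⟩
      · intro j
        simp only [hddef, PiLp.add_apply, EuclideanSpace.single_apply]
        by_cases hj : j = j0 <;> simp [hj] <;> [linarith [hz j0]; exact hz j]
      · rw [add_sub_cancel_left, hddef, EuclideanSpace.norm_single]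
        rw [Real.norm_eq_abs, abs_of_pos (by linarith)]
        linarith
      · obtain ⟨t0, _, ht0⟩ := Finset.exists_mem_eq_inf' hne (fun t => f t (z + d))
        have hdd : dotp (p t0) d = p t0 j0 * (ε/2) := by
          simp [hddef, dotp, EuclideanSpace.single_apply]
        have hstep : f t0 (z + d) = f t0 z + lam t0 * (p t0 j0 * (ε/2)) := by
          simp only [hfdef, dotp_add, hdd]
          ring
        have hpos : 0 < lam t0 * (p t0 j0 * (ε/2)) :=
          mul_pos (hlam t0) (mul_pos (hp t0 j0) (by linarith))
        have heq : u (z + d) = f t0 (z + d) := ht0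
        rw [heq, hstep]
        exact lt_of_le_of_lt (hule z t0) (by linarith [hpos])
    · -- continuous
      exact (cont_inf' Finset.univ hne f (fun t => by
        simp only [hfdef]
        exact continuous_const.add (continuous_const.mul
          ((dotp_cont (p t)).sub continuous_const)))).continuousOn
    · -- maximization
      intro t
      refine ⟨rfl, ?_⟩
      intro z hz hze
      have h1 : u z ≤ f t z := hule z t
      have h2 : f t z = v t := by
        simp only [hfdef, hze]; ring
      rw [huct t]
      rw [h2] at h1
      exact h1


end
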